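/- arXiv:1809.06067 — 2 statements merged into one kernel-verified Lean document; each statement's English description precedes it below -/
import Mathlib

section
/- For any t_f > 0 and real s, the value φ(s) = (e^{2s t_f} − 1)/(2s) (with φ(0) = t_f) satisfies φ(s) ≥ t_f when s ≥ 0 and φ(s) ≤ t_f when s ≤ 0; consequently for A symmetric negative semi-definite and B = I, every eigenvalue of G(t_f) is at most t_f, so the minimum energy lower bound satisfies 1/λ_max(G(t_f)) ≥ 1/t_f with equality iff 0 is an eigenvalue of A. -/
open Matrix Filter Topology

noncomputable def gram {n m : ℕ} (A : Matrix (Fin n) (Fin n) ℝ) (B : Matrix (Fin n) (Fin m) ℝ)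
    (tf : ℝ) : Matrix (Fin n) (Fin n) ℝ :=
  fun i j => ∫ t in (0:ℝ)..tf,
    (NormedSpace.exp (t • A) * B * Bᵀ * NormedSpace.exp (t • Aᵀ)) i j

noncomputable def phi (tf s : ℝ) : ℝ :=
  if s = 0 then tf else (Real.exp (2 * s * tf) - 1) / (2 * s)

lemma phi_integral (tf c : ℝ) : ∫ t in (0:ℝ)..tf, Real.exp (2 * c * t) = phi tf c := by
  rcases eq_or_ne c 0 with rfl | hc
  · simp [phi]
  · have h2c : (2*c) ≠ 0 := mul_ne_zero two_ne_zero hc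
    rw [phi, if_neg hc,
      intervalIntegral.integral_comp_mul_left (f := Real.exp) h2c, mul_zero,
      integral_exp, Real.exp_zero, smul_eq_mul, ← div_eq_inv_mul]

lemma phi_pos {tf : ℝ} (htf : 0 < tf) (c : ℝ) : 0 < phi tf c := by
  rcases eq_or_ne c 0 with rfl | hc
  · simpa [phi]
  · rw [phi, if_neg hc]
    rcases lt_or_gt_of_ne hc with h | h
    · apply div_pos_of_neg_of_neg
      · simp only [sub_neg]
        exact Real.exp_lt_one_iff.mpr (by nlinarith)
      · linarith
    · apply div_pos
      · simp only [sub_pos]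
        exact Real.one_lt_exp_iff.mpr (by nlinarith)
      · linarith

lemma le_phi {tf : ℝ} (htf : 0 < tf) {s : ℝ} (hs : 0 ≤ s) : tf ≤ phi tf s := by
  rcases eq_or_ne s 0 with rfl | hc
  · simp [phi]
  · have h2s : 0 < 2*s := by
      have := lt_of_le_of_ne hs (Ne.symm hc)
      linarith
    rw [phi, if_neg hc, le_div_iff₀ h2s]
    nlinarith [Real.add_one_le_exp (2*s*tf)]

lemma phi_le {tf : ℝ} (htf : 0 < tf) {s : ℝ} (hs : s ≤ 0) : phi tf s ≤ tf := by
  rcases eq_or_ne s 0 with rfl | hc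
  · simp [phi]
  · have h2s : 2*s < 0 := by cases hs.lt_or_eq <;> simp_all; linarith
    rw [phi, if_neg hc, div_le_iff_of_neg h2s]
    nlinarith [Real.add_one_le_exp (2*s*tf)]

lemma phi_lt {tf : ℝ} (htf : 0 < tf) {s : ℝ} (hs : s < 0) : phi tf s < tf := by
  have h2s : 2*s < 0 := by linarith
  rw [phi, if_neg hs.ne, div_lt_iff_of_neg h2s]
  nlinarith [Real.add_one_lt_exp (show 2*s*tf ≠ 0 by nlinarith)]

lemma gram_eq {n : ℕ} (tf : ℝ) (A : Matrix (Fin n) (Fin n) ℝ) (hA : A.IsHermitian) :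
    gram A (1 : Matrix (Fin n) (Fin n) ℝ) tf =
      (hA.eigenvectorUnitary : Matrix (Fin n) (Fin n) ℝ) *
        diagonal (fun k => phi tf (hA.eigenvalues k)) *
        star (hA.eigenvectorUnitary : Matrix (Fin n) (Fin n) ℝ) := by
  set U : Matrix (Fin n) (Fin n) ℝ := (hA.eigenvectorUnitary : Matrix (Fin n) (Fin n) ℝ) with hUdef
  set d : Fin n → ℝ := hA.eigenvalues with hddef
  have hspec : A = U * diagonal d * star U := by
    simpa [RCLike.ofReal_real_eq_id] using hA.spectral_theorem
  have hUunit : IsUnit U := (Unitary.toUnits hA.eigenvectorUnitary).isUnit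
  have hUinv : U⁻¹ = star U := inv_eq_left_inv (Unitary.coe_star_mul_self hA.eigenvectorUnitary)
  have hsUU : star U * U = 1 := Unitary.coe_star_mul_self hA.eigenvectorUnitary
  have hAT : Aᵀ = A := by
    rw [← conjTranspose_eq_transpose_of_trivial]; exact hA
  have hexp : ∀ t : ℝ, NormedSpace.exp (t • A) =
      U * diagonal (fun k => Real.exp (t * d k)) * star U := by
    intro t
    have ht : t • A = U * diagonal (fun k => t * d k) * star U := by
      rw [hspec, show (fun k => t * d k) = t • d from rfl, diagonal_smul, Matrix.mul_smul,
        Matrix.smul_mul]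
    rw [ht, ← hUinv, Matrix.exp_conj _ _ hUunit, hUinv, Matrix.exp_diagonal, Pi.exp_def]
    congr 1
    · congr 1
      funext k
      rw [Real.exp_eq_exp_ℝ]
  have hmat : ∀ t : ℝ,
      NormedSpace.exp (t • A) * (1 : Matrix (Fin n) (Fin n) ℝ) *
        (1 : Matrix (Fin n) (Fin n) ℝ)ᵀ * NormedSpace.exp (t • Aᵀ) =
      U * diagonal (fun k => Real.exp (2 * d k * t)) * star U := by
    intro t
    rw [transpose_one, mul_one, mul_one, hAT, hexp t]
    rw [show U * diagonal (fun k => Real.exp (t * d k)) * star U *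
        (U * diagonal (fun k => Real.exp (t * d k)) * star U) =
        U * (diagonal (fun k => Real.exp (t * d k)) * (star U * U) *
          diagonal (fun k => Real.exp (t * d k))) * star U by
      simp only [Matrix.mul_assoc]]
    rw [hsUU, mul_one, diagonal_mul_diagonal,
      show (fun i => Real.exp (t * d i) * Real.exp (t * d i)) = fun k => Real.exp (2 * d k * t)
        from funext fun k => by rw [← Real.exp_add]; ring_nf]
  ext i j
  show (∫ t in (0:ℝ)..tf, _) = _
  rw [intervalIntegral.integral_congr (g := fun t =>
      (U * diagonal (fun k => Real.exp (2 * d k * t)) * star U) i j)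
      (fun t _ => by rw [hmat t])]
  have hentry : ∀ (f : Fin n → ℝ), (U * diagonal f * star U) i j
      = ∑ k, U i k * U j k * f k := by
    intro f
    simp only [Matrix.mul_apply, Matrix.diagonal_apply, mul_ite, mul_zero,
      Finset.sum_ite_eq', Finset.mem_univ, if_true, Matrix.star_apply, star_trivial]
    exact Finset.sum_congr rfl fun k _ => by ring
  simp only [hentry]
  rw [intervalIntegral.integral_finset_sum (fun k _ =>
    (Continuous.intervalIntegrable (by fun_prop) _ _))]
  exact Finset.sum_congr rfl fun k _ => by
    rw [intervalIntegral.integral_const_mul, phi_integral]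

theorem nsd_lower_bound {n : ℕ} [NeZero n] (tf : ℝ) (htf : 0 < tf)
    (A : Matrix (Fin n) (Fin n) ℝ) (hA : A.IsHermitian) (hnsd : (-A).PosSemidef) :
    (∀ s : ℝ, 0 ≤ s → tf ≤ phi tf s) ∧
      (∀ s : ℝ, s ≤ 0 → phi tf s ≤ tf) ∧
      (∀ μ ∈ spectrum ℝ (gram A (1 : Matrix (Fin n) (Fin n) ℝ) tf), μ ≤ tf) ∧
      1 / tf ≤ 1 / sSup (spectrum ℝ (gram A (1 : Matrix (Fin n) (Fin n) ℝ) tf)) ∧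
      (1 / sSup (spectrum ℝ (gram A (1 : Matrix (Fin n) (Fin n) ℝ) tf)) = 1 / tf ↔
        (0:ℝ) ∈ spectrum ℝ A) := by
  haveI : Nonempty (Fin n) := Fin.pos_iff_nonempty.mp (Nat.pos_of_ne_zero (NeZero.ne n))
  set d : Fin n → ℝ := hA.eigenvalues with hddef
  -- eigenvalues are nonpositive
  have hd : ∀ k, d k ≤ 0 := by
    intro k
    have h1 := hnsd.dotProduct_mulVec_nonneg ⇑(hA.eigenvectorBasis k)
    rw [neg_mulVec, dotProduct_neg] at h1
    have h2 := hA.eigenvalues_eq k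
    simp only [RCLike.re_to_real] at h2
    rw [hddef, h2]
    linarith
  have hspecA : spectrum ℝ A = Set.range d := by
    conv_lhs => rw [hA.spectral_theorem]
    rw [show (RCLike.ofReal ∘ hA.eigenvalues : Fin n → ℝ) = d by
      funext k; simp [RCLike.ofReal_real_eq_id, hddef]]
    rw [Unitary.conjStarAlgAut_apply, Unitary.spectrum_star_right_conjugate, spectrum_diagonal]
  have hspecG : spectrum ℝ (gram A (1 : Matrix (Fin n) (Fin n) ℝ) tf) =
      Set.range (fun k => phi tf (d k)) := by
    rw [gram_eq tf A hA, Unitary.spectrum_star_right_conjugate, spectrum_diagonal]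
  set S := spectrum ℝ (gram A (1 : Matrix (Fin n) (Fin n) ℝ) tf) with hS
  have hSne : S.Nonempty := by
    rw [hspecG]; exact Set.range_nonempty _
  have hSfin : S.Finite := by rw [hspecG]; exact Set.finite_range _
  have hSle : ∀ μ ∈ S, μ ≤ tf := by
    rw [hspecG]; rintro μ ⟨k, rfl⟩; exact phi_le htf (hd k)
  have hsup_mem : sSup S ∈ S := hSne.csSup_mem hSfin
  have hsup_le : sSup S ≤ tf := csSup_le hSne hSle
  have hsup_mem' : ∃ k, phi tf (d k) = sSup S := by
    have h0 := hsup_mem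
    rw [hspecG] at h0
    obtain ⟨k, hk⟩ := h0
    simp only [] at hk
    exact ⟨k, by rw [hk, ← hspecG]⟩
  have hsup_pos : 0 < sSup S := by
    obtain ⟨k, hk⟩ := hsup_mem'
    rw [← hk]; exact phi_pos htf _
  refine ⟨fun s hs => le_phi htf hs, fun s hs => phi_le htf hs, hSle,
    one_div_le_one_div_of_le hsup_pos hsup_le, ?_⟩
  constructor
  · intro h
    have hsup_eq : sSup S = tf := by
      have := inv_injective (by simpa [one_div] using h)
      exact this
    obtain ⟨k, hk⟩ := hsup_mem'
    have hk0 : d k = 0 := by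
      by_contra hne
      have := phi_lt htf (lt_of_le_of_ne (hd k) hne)
      rw [hk, hsup_eq] at this
      exact lt_irrefl _ this
    rw [hspecA]
    exact ⟨k, hk0⟩
  · intro h
    have h' : ∃ k, d k = 0 := by rw [hspecA] at h; exact h.imp fun k hk => hk
    obtain ⟨k, hk⟩ := h'
    have htf_mem : tf ∈ S := by
      rw [hspecG]
      have : phi tf (d k) = tf := by rw [hk]; simp [phi]
      exact ⟨k, this⟩
    have : tf ≤ sSup S := le_csSup hSfin.bddAbove htf_mem
    rw [le_antisymm hsup_le this]
end

section
/- For any n×n real symmetric positive definite matrix M with n ≥ 2, the smallest eigenvalue satisfies λ_min(M) ≥ 1/√(α'/n + √((n−1)/n · (β' − α'²/n))), where α' = trace(M⁻²) and β' = trace(M⁻⁴). -/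
open Matrix Finset

/-- Samuelson / Wolkowicz–Styan type bound for the maximum of a finite family. -/
lemma max_bound_aux {n : ℕ} (hn : 2 ≤ n) (x : Fin n → ℝ) (k : Fin n)
    (hk : ∀ i, x i ≤ x k) :
    x k ≤ (∑ i, x i) / n +
      Real.sqrt (((n : ℝ) - 1) / n * (∑ i, (x i) ^ 2 - (∑ i, x i) ^ 2 / n)) := by
  have hn0 : (0 : ℝ) < n := by positivity
  set m : ℝ := (∑ i, x i) / n with hm
  have hsum : ∑ i, x i = n * m := by rw [hm, mul_div_assoc', eq_div_iff hn0.ne', mul_comm]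
  -- the mean is at most the max
  have hmk : m ≤ x k := by
    rw [hm, div_le_iff₀ hn0]
    calc ∑ i, x i ≤ ∑ _i : Fin n, x k := Finset.sum_le_sum fun i _ => hk i
    _ = x k * n := by simp [mul_comm]
  -- variance identity
  have hvar : ∑ i, (x i - m) ^ 2 = ∑ i, (x i) ^ 2 - (∑ i, x i) ^ 2 / n := by
    have : ∑ i, (x i - m) ^ 2 = ∑ i, ((x i) ^ 2 - 2 * m * x i + m ^ 2) := by
      congr 1; funext i; ring
    rw [this, Finset.sum_add_distrib, Finset.sum_sub_distrib, ← Finset.mul_sum, hsum]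
    simp only [Finset.sum_const, Finset.card_univ, Fintype.card_fin, nsmul_eq_mul]
    field_simp
    ring
  -- Cauchy–Schwarz on the complement of k
  have hcs : ((univ.erase k).sum fun i => x i - m) ^ 2 ≤
      ((univ.erase k).card : ℝ) * (univ.erase k).sum fun i => (x i - m) ^ 2 := by
    exact sq_sum_le_card_mul_sum_sq
  have hcard : ((univ.erase k).card : ℝ) = (n : ℝ) - 1 := by
    rw [Finset.card_erase_of_mem (Finset.mem_univ k)]
    simp only [Finset.card_univ, Fintype.card_fin]
    have : 1 ≤ n := le_trans (by norm_num) hn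
    push_cast [Nat.cast_sub this]
    ring
  have hsum_erase : ((univ.erase k).sum fun i => x i - m) = -(x k - m) := by
    have h1 : ∑ i, (x i - m) = (x k - m) + (univ.erase k).sum fun i => x i - m := by
      rw [← Finset.add_sum_erase _ _ (Finset.mem_univ k)]
    have h2 : ∑ i, (x i - m) = 0 := by
      rw [Finset.sum_sub_distrib, hsum]; simp
    linarith
  have hsq_erase : ((univ.erase k).sum fun i => (x i - m) ^ 2) =
      (∑ i, (x i - m) ^ 2) - (x k - m) ^ 2 := by
    rw [← Finset.add_sum_erase _ (fun i => (x i - m) ^ 2) (Finset.mem_univ k)]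
    ring
  rw [hsum_erase, hcard, hsq_erase] at hcs
  set s2 : ℝ := ∑ i, (x i - m) ^ 2 with hs2
  have hkey : (x k - m) ^ 2 ≤ ((n : ℝ) - 1) / n * s2 := by
    have h1 : (1 : ℝ) ≤ (n : ℝ) := by exact_mod_cast le_trans (by norm_num) hn
    rw [neg_pow] at hcs
    have : (n : ℝ) * (x k - m) ^ 2 ≤ ((n : ℝ) - 1) * s2 := by nlinarith
    rw [div_mul_eq_mul_div, le_div_iff₀ hn0]
    nlinarith
  have : x k - m ≤ Real.sqrt (((n : ℝ) - 1) / n * s2) := by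
    calc x k - m = Real.sqrt ((x k - m) ^ 2) := by
          rw [Real.sqrt_sq (by linarith)]
    _ ≤ Real.sqrt (((n : ℝ) - 1) / n * s2) := Real.sqrt_le_sqrt hkey
  rw [hvar] at this
  linarith

/-- Conjugation by a unitary commutes with powers. -/
lemma conj_pow_aux {n : ℕ} (U A : Matrix (Fin n) (Fin n) ℝ)
    (h1 : U * star U = 1) (h2 : star U * U = 1) (k : ℕ) :
    (U * A * star U) ^ k = U * A ^ k * star U := by
  induction k with
  | zero => simp only [pow_zero, mul_one]; exact h1.symm
  | succ k ih =>
      rw [pow_succ, pow_succ, ih]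
      calc U * A ^ k * star U * (U * A * star U)
          = U * (A ^ k * ((star U * U) * (A * star U))) := by
            simp only [mul_assoc]
        _ = U * (A ^ k * A) * star U := by rw [h2, one_mul]; simp only [mul_assoc]

theorem eig_min_lower_estimate {n : ℕ} (hn : 2 ≤ n) (M : Matrix (Fin n) (Fin n) ℝ)
    (hM : M.PosDef) :
    1 / Real.sqrt ((M⁻¹ ^ 2).trace / n +
        Real.sqrt (((n : ℝ) - 1) / n * ((M⁻¹ ^ 4).trace - (M⁻¹ ^ 2).trace ^ 2 / n))) ≤
      sInf (spectrum ℝ M) := by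
  have hE : M.IsHermitian := hM.1
  set ev : Fin n → ℝ := hE.eigenvalues with hev
  have hpos : ∀ i, 0 < ev i := hM.eigenvalues_pos
  set U : Matrix (Fin n) (Fin n) ℝ := (hE.eigenvectorUnitary : Matrix (Fin n) (Fin n) ℝ) with hU
  have hU1 : U * star U = 1 := (Matrix.mem_unitaryGroup_iff).mp hE.eigenvectorUnitary.2
  have hU2 : star U * U = 1 := (Matrix.mem_unitaryGroup_iff').mp hE.eigenvectorUnitary.2
  have hspec : M = U * diagonal ev * star U := by
    have := hE.spectral_theorem
    rwa [show RCLike.ofReal ∘ hE.eigenvalues = ev by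
      rw [RCLike.ofReal_real_eq_id]; rfl] at this
  -- inverse formula
  have hMinv : M⁻¹ = U * diagonal (fun i => (ev i)⁻¹) * star U := by
    apply Matrix.inv_eq_left_inv
    calc U * diagonal (fun i => (ev i)⁻¹) * star U * M
        = U * diagonal (fun i => (ev i)⁻¹) * (star U * U) * (diagonal ev * star U) := by
          rw [hspec]; simp only [mul_assoc]
      _ = U * (diagonal (fun i => (ev i)⁻¹) * diagonal ev) * star U := by
          rw [hU2, mul_one]; simp only [mul_assoc]
      _ = 1 := by
          rw [Matrix.diagonal_mul_diagonal]
          have : (fun i => (ev i)⁻¹ * ev i) = fun _ => (1 : ℝ) := by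
            funext i; exact inv_mul_cancel₀ (hpos i).ne'
          rw [this, Matrix.diagonal_one, mul_one, hU1]
  -- traces of powers of the inverse
  have htr : ∀ k : ℕ, (M⁻¹ ^ k).trace = ∑ i, ((ev i)⁻¹) ^ k := by
    intro k
    rw [hMinv, conj_pow_aux U _ hU1 hU2, Matrix.trace_mul_cycle, hU2, one_mul,
      Matrix.diagonal_pow, Matrix.trace_diagonal]
    simp [Pi.pow_apply]
  -- identify the infimum of the spectrum with the smallest eigenvalue
  obtain ⟨k, -, hk⟩ := Finset.exists_min_image Finset.univ ev
    (Finset.univ_nonempty_iff.mpr ⟨⟨0, by omega⟩⟩)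
  have hsInf : sInf (spectrum ℝ M) = ev k := by
    rw [hE.spectrum_real_eq_range_eigenvalues]
    apply IsLeast.csInf_eq
    exact ⟨⟨k, rfl⟩, by rintro y ⟨i, rfl⟩; exact hk i (Finset.mem_univ i)⟩
  rw [hsInf]
  -- apply the max bound to x i = (ev i)⁻¹ ^ 2
  set x : Fin n → ℝ := fun i => ((ev i)⁻¹) ^ 2 with hx
  have hxmax : ∀ i, x i ≤ x k := by
    intro i
    have h1 : (ev i)⁻¹ ≤ (ev k)⁻¹ :=
      one_div (ev i) ▸ one_div (ev k) ▸
        one_div_le_one_div_of_le (hpos k) (hk i (Finset.mem_univ i))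
    exact pow_le_pow_left₀ (le_of_lt (inv_pos.mpr (hpos i))) h1 2
  have hbound := max_bound_aux hn x k hxmax
  have hsum2 : (M⁻¹ ^ 2).trace = ∑ i, x i := htr 2
  have hsum4 : (M⁻¹ ^ 4).trace = ∑ i, (x i) ^ 2 := by
    rw [htr 4]; congr 1; funext i; rw [hx]; ring
  rw [hsum2, hsum4]
  set E : ℝ := (∑ i, x i) / n +
      Real.sqrt (((n : ℝ) - 1) / n * (∑ i, (x i) ^ 2 - (∑ i, x i) ^ 2 / n)) with hE'
  have hxk_pos : 0 < x k := by
    have := hpos k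
    simp only [hx]
    positivity
  have hEpos : 0 < E := lt_of_lt_of_le hxk_pos hbound
  have hsqrtE : (ev k)⁻¹ ≤ Real.sqrt E := by
    have : Real.sqrt (x k) ≤ Real.sqrt E := Real.sqrt_le_sqrt hbound
    rwa [hx, Real.sqrt_sq (le_of_lt (inv_pos.mpr (hpos k)))] at this
  rw [div_le_iff₀ (Real.sqrt_pos.mpr hEpos)]
  calc (1 : ℝ) = ev k * (ev k)⁻¹ := (mul_inv_cancel₀ (hpos k).ne').symm
    _ ≤ ev k * Real.sqrt E := by
        exact mul_le_mul_of_nonneg_left hsqrtE (le_of_lt (hpos k))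
end
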